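/- Let T̃ : X̃ → X̃ be the extension of a proper map T : X → X to the one-point compactification, and let μ̃ be a T̃-invariant Borel probability with μ̃({∞}) = c < 1. Then μ = (1/(1-c)) μ̃|_{Borel(X)} is a T-invariant probability on X and h_{μ̃}(T̃) ≤ h_μ(T). -/

import Mathlib

open Set Filter Topology
open scoped ENNReal

/-- A map is proper if it is continuous and preimages of compact sets are compact. -/
def IsProper {X Y : Type*} [TopologicalSpace X] [TopologicalSpace Y] (f : X → Y) : Prop :=
  Continuous f ∧ ∀ K : Set Y, IsCompact K → IsCompact (f ⁻¹' K)

/-- An admissible covering: open, finite, covers, and each element has compact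
closure or compact complement. -/
def IsAdmissibleCover {X : Type*} [TopologicalSpace X] (α : Set (Set X)) : Prop :=
  α.Finite ∧ (∀ A ∈ α, IsOpen A) ∧ ⋃₀ α = univ ∧
    ∀ A ∈ α, IsCompact (closure A) ∨ IsCompact Aᶜ

/-- `coverIter T α n` is the collection of sets `A₀ ∩ T⁻¹ A₁ ∩ ⋯ ∩ T⁻⁽ⁿ⁻¹⁾ A_{n-1}`
with all `Aᵢ ∈ α`; the paper's `αⁿ` is `coverIter T α (n+1)`. -/
def coverIter {X : Type*} (T : X → X) (α : Set (Set X)) (n : ℕ) : Set (Set X) :=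
  {B | ∃ A : Fin n → Set X, (∀ i, A i ∈ α) ∧ B = ⋂ i : Fin n, T^[i.val] ⁻¹' A i}

/-- `coverNum β` is the minimal cardinality of a (finite) subcover of `β`. -/
noncomputable def coverNum {X : Type*} (β : Set (Set X)) : ℕ :=
  sInf {k | ∃ γ ⊆ β, γ.Finite ∧ ⋃₀ γ = univ ∧ γ.ncard = k}

open MeasureTheory

/-- A finite Borel (measurable) partition of the space. -/
def IsFinBorelPartition {X : Type*} [MeasurableSpace X] (𝒜 : Set (Set X)) : Prop :=
  𝒜.Finite ∧ (∀ A ∈ 𝒜, MeasurableSet A) ∧ 𝒜.PairwiseDisjoint id ∧ ⋃₀ 𝒜 = Set.univ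

/-- The entropy `H(𝒜) = Σ_{B ∈ 𝒜} φ(μ(B))` with `φ(x) = -x log x`. -/
noncomputable def partStatic {X : Type*} [MeasurableSpace X] (μ : Measure X)
    (𝒜 : Set (Set X)) : ℝ :=
  ∑ᶠ B ∈ 𝒜, Real.negMulLog (μ B).toReal

/-- `h(T, 𝒜) = lim (1/n) H(𝒜ⁿ)` (as a limsup), where `𝒜ⁿ` is the common refinement
`𝒜 ∨ T⁻¹𝒜 ∨ ⋯ ∨ T⁻⁽ⁿ⁻¹⁾𝒜 = coverIter T 𝒜 n`. -/
noncomputable def measPartEntropy {X : Type*} [MeasurableSpace X] (T : X → X)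
    (μ : Measure X) (𝒜 : Set (Set X)) : EReal :=
  Filter.limsup (fun n : ℕ => ((partStatic μ (coverIter T 𝒜 n) / n : ℝ) : EReal)) Filter.atTop

/-- The measure-theoretic (Kolmogorov–Sinai) entropy `h_μ(T)`, the supremum of
`h(T, 𝒜)` over all finite Borel partitions `𝒜`. -/
noncomputable def measEntropy {X : Type*} [MeasurableSpace X] (T : X → X)
    (μ : Measure X) : EReal :=
  ⨆ (𝒜 : Set (Set X)) (_ : IsFinBorelPartition 𝒜), measPartEntropy T μ 𝒜

/-- The extension of `T : X → X` to the one-point compactification, fixing `∞`. -/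
def onePointExt {X : Type*} (T : X → X) : OnePoint X → OnePoint X := Option.map T


lemma negMulLog_le_one' {x : ℝ} (hx : 0 ≤ x) : Real.negMulLog x ≤ 1 := by
  rcases eq_or_lt_of_le hx with h | h
  · simp [← h, Real.negMulLog]
  · have h1 : Real.log x⁻¹ ≤ x⁻¹ - 1 := Real.log_le_sub_one_of_pos (by positivity)
    rw [Real.log_inv] at h1
    have : Real.negMulLog x = x * (-Real.log x) := by unfold Real.negMulLog; ring
    rw [this]
    have h2 : x * (-Real.log x) ≤ x * (x⁻¹ - 1) :=
      mul_le_mul_of_nonneg_left (by linarith) hx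
    have h3 : x * (x⁻¹ - 1) = 1 - x := by field_simp
    linarith

lemma onePointExt_iterate_coe {X : Type*} (T : X → X) (n : ℕ) (x : X) :
    (onePointExt T)^[n] (x : OnePoint X) = ((T^[n] x : X) : OnePoint X) := by
  induction n with
  | zero => rfl
  | succ n ih =>
      rw [Function.iterate_succ_apply', Function.iterate_succ_apply', ih]
      rfl

open OnePoint in
lemma onePointExt_preimage {X : Type*} (T : X → X) (s : Set (OnePoint X)) :
    onePointExt T ⁻¹' s =
      ((fun x : X => (x : OnePoint X)) '' (T ⁻¹' ((fun x : X => (x : OnePoint X)) ⁻¹' s)))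
        ∪ ({(∞ : OnePoint X)} ∩ s) := by
  ext y
  induction y using OnePoint.rec with
  | infty =>
      simp only [mem_preimage, mem_union, mem_inter_iff, mem_singleton_iff, mem_image]
      constructor
      · intro h; exact Or.inr ⟨trivial, h⟩
      · rintro (⟨x, _, hx⟩ | ⟨-, h⟩)
        · exact absurd hx (by simp [OnePoint.coe_ne_infty x])
        · exact h
  | coe x =>
      simp only [mem_preimage, mem_union, mem_inter_iff, mem_singleton_iff, mem_image]
      constructor
      · intro h
        exact Or.inl ⟨x, by exact h, rfl⟩
      · rintro (⟨x', hx', h⟩ | ⟨h, -⟩)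
        · have : x' = x := OnePoint.coe_injective h
          subst this; exact hx'
        · exact (OnePoint.coe_ne_infty x h).elim

open OnePoint in
lemma measurableSet_infty {X : Type*} [TopologicalSpace X] [MeasurableSpace (OnePoint X)]
    [BorelSpace (OnePoint X)] : MeasurableSet {(∞ : OnePoint X)} := by
  rw [← OnePoint.compl_range_coe]
  exact OnePoint.isOpen_range_coe.measurableSet.compl

open OnePoint in
lemma measurable_onePointExt {X : Type*} [TopologicalSpace X] [MeasurableSpace X] [BorelSpace X]
    [MeasurableSpace (OnePoint X)] [BorelSpace (OnePoint X)] {T : X → X} (hT : Measurable T) :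
    Measurable (onePointExt T) := by
  have hemb : MeasurableEmbedding (fun x : X => (x : OnePoint X)) :=
    OnePoint.isOpenEmbedding_coe.measurableEmbedding
  intro s hs
  rw [onePointExt_preimage]
  exact (hemb.measurableSet_image' (hT (hemb.measurable hs))).union
    (measurableSet_infty.inter hs)

open OnePoint in
lemma coe_image_preimage' {X : Type*} (T : X → X) (s : Set X) :
    onePointExt T ⁻¹' ((fun x : X => (x : OnePoint X)) '' s)
      = (fun x : X => (x : OnePoint X)) '' (T ⁻¹' s) := by
  rw [onePointExt_preimage, preimage_image_eq _ OnePoint.coe_injective]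
  have h1 : ({(∞ : OnePoint X)} ∩ ((fun x : X => (x : OnePoint X)) '' s)) = ∅ := by
    rw [Set.singleton_inter_eq_empty]
    rintro ⟨x, -, hx⟩
    exact OnePoint.coe_ne_infty x hx
  rw [h1, union_empty]

open OnePoint in
lemma isProb_aux {X : Type*} [TopologicalSpace X] [MeasurableSpace X] [BorelSpace X]
    [MeasurableSpace (OnePoint X)] [BorelSpace (OnePoint X)]
    (μt : Measure (OnePoint X)) [IsProbabilityMeasure μt]
    (hc : μt {(∞ : OnePoint X)} < 1) :
    IsProbabilityMeasure
      ((1 - μt {(∞ : OnePoint X)})⁻¹ • μt.comap (fun x : X => (x : OnePoint X))) := by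
  have hemb : MeasurableEmbedding (fun x : X => (x : OnePoint X)) :=
    OnePoint.isOpenEmbedding_coe.measurableEmbedding
  have h0 : (1 : ℝ≥0∞) - μt {(∞ : OnePoint X)} ≠ 0 := (tsub_pos_of_lt hc).ne'
  have htop : (1 : ℝ≥0∞) - μt {(∞ : OnePoint X)} ≠ ⊤ :=
    ne_top_of_le_ne_top ENNReal.one_ne_top tsub_le_self
  constructor
  rw [Measure.smul_apply, smul_eq_mul, hemb.comap_apply, image_univ]
  have hr : range (fun x : X => (x : OnePoint X)) = ({(∞ : OnePoint X)})ᶜ :=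
    OnePoint.compl_infty.symm ▸ rfl
  rw [hr, measure_compl measurableSet_infty (measure_ne_top μt _), measure_univ,
    ENNReal.inv_mul_cancel h0 htop]

open OnePoint in
lemma map_aux {X : Type*} [TopologicalSpace X] [MeasurableSpace X] [BorelSpace X]
    [MeasurableSpace (OnePoint X)] [BorelSpace (OnePoint X)]
    {T : X → X} (hTm : Measurable T)
    (μt : Measure (OnePoint X)) [IsProbabilityMeasure μt]
    (hinv : μt.map (onePointExt T) = μt) (e : ℝ≥0∞) :
    (e • μt.comap (fun x : X => (x : OnePoint X))).map T
      = e • μt.comap (fun x : X => (x : OnePoint X)) := by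
  have hemb : MeasurableEmbedding (fun x : X => (x : OnePoint X)) :=
    OnePoint.isOpenEmbedding_coe.measurableEmbedding
  have hext : Measurable (onePointExt T) := measurable_onePointExt hTm
  ext s hs
  rw [Measure.map_apply hTm hs, Measure.smul_apply, Measure.smul_apply, smul_eq_mul,
    smul_eq_mul, hemb.comap_apply, hemb.comap_apply, ← coe_image_preimage',
    ← Measure.map_apply hext (hemb.measurableSet_image' hs), hinv]

open OnePoint in
lemma entropy_aux {X : Type*} [TopologicalSpace X] [MeasurableSpace X] [BorelSpace X]
    [MeasurableSpace (OnePoint X)] [BorelSpace (OnePoint X)]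
    {T : X → X} (hTm : Measurable T)
    (μt : Measure (OnePoint X)) [IsProbabilityMeasure μt]
    (μ : Measure X) [IsProbabilityMeasure μ]
    (hμ : ∀ s : Set X, μt ((fun x : X => (x : OnePoint X)) '' s)
        = (1 - μt {(∞ : OnePoint X)}) * μ s) :
    measEntropy (onePointExt T) μt ≤ measEntropy T μ := by
  classical
  have hemb : MeasurableEmbedding (fun x : X => (x : OnePoint X)) :=
    OnePoint.isOpenEmbedding_coe.measurableEmbedding
  have hext : Measurable (onePointExt T) := measurable_onePointExt hTm
  set ι : X → OnePoint X := fun x => (x : OnePoint X) with hι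
  set c : ℝ≥0∞ := μt {(∞ : OnePoint X)} with hcdef
  set a : ℝ := (1 - c).toReal with hadef
  have ha0 : 0 ≤ a := ENNReal.toReal_nonneg
  have ha1 : a ≤ 1 := by
    rw [hadef]
    simpa using ENNReal.toReal_mono ENNReal.one_ne_top (tsub_le_self : (1:ℝ≥0∞) - c ≤ 1)
  have hμ1 : ∀ s : Set X, (μ s).toReal ≤ 1 := fun s => by
    simpa using ENNReal.toReal_mono ENNReal.one_ne_top (prob_le_one (μ := μ) (s := s))
  rw [measEntropy, measEntropy]
  refine iSup₂_le fun 𝒜 h𝒜 => ?_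
  obtain ⟨hAfin, hAmeas, hAdisj, hAcov⟩ := h𝒜
  set r : Set (OnePoint X) → Set X := fun B => ι ⁻¹' B with hr
  set 𝒜' : Set (Set X) := r '' 𝒜 with h𝒜'def
  have h𝒜' : IsFinBorelPartition 𝒜' := by
    refine ⟨hAfin.image r, ?_, ?_, ?_⟩
    · rintro A' ⟨A, hA, rfl⟩; exact hemb.measurable (hAmeas A hA)
    · rintro A' ⟨A, hA, rfl⟩ B' ⟨B, hB, rfl⟩ hne
      have hAB : A ≠ B := fun h => hne (by rw [h])
      exact Disjoint.preimage _ (hAdisj hA hB hAB)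
    · rw [h𝒜'def, sUnion_image, hr, ← preimage_sUnion, hAcov, preimage_univ]
  have hpre : ∀ (i : ℕ) (A : Set (OnePoint X)),
      ι ⁻¹' ((onePointExt T)^[i] ⁻¹' A) = T^[i] ⁻¹' (ι ⁻¹' A) := by
    intro i A; ext x
    simp only [mem_preimage, hι, onePointExt_iterate_coe]
  have hcov : ∀ n, coverIter T 𝒜' n = r '' coverIter (onePointExt T) 𝒜 n := by
    intro n; ext B'
    constructor
    · rintro ⟨A', hA', rfl⟩
      choose A hAmem hAeq using fun i => (hA' i)
      refine ⟨⋂ i : Fin n, (onePointExt T)^[i.val] ⁻¹' A i, ⟨A, hAmem, rfl⟩, ?_⟩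
      show ι ⁻¹' _ = _
      rw [preimage_iInter]
      refine iInter_congr fun i => ?_
      rw [hpre]
      exact congrArg (fun t => T^[(i : ℕ)] ⁻¹' t) (hAeq i)
    · rintro ⟨B, ⟨A, hA, rfl⟩, rfl⟩
      refine ⟨fun i => r (A i), fun i => ⟨A i, hA i, rfl⟩, ?_⟩
      show ι ⁻¹' _ = _
      rw [preimage_iInter]
      exact iInter_congr fun i => (hpre i.val (A i))
  have hfinn : ∀ n, (coverIter (onePointExt T) 𝒜 n).Finite := by
    intro n
    have hsub : coverIter (onePointExt T) 𝒜 n ⊆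
        (fun A : Fin n → Set (OnePoint X) =>
          ⋂ i : Fin n, (onePointExt T)^[i.val] ⁻¹' A i) '' (univ.pi fun _ => 𝒜) := by
      rintro B ⟨A, hA, rfl⟩
      exact ⟨A, fun i _ => hA i, rfl⟩
    exact ((Set.Finite.pi fun _ => hAfin).image _).subset hsub
  have hmeasB : ∀ n, ∀ B ∈ coverIter (onePointExt T) 𝒜 n, MeasurableSet B := by
    rintro n B ⟨A, hA, rfl⟩
    exact MeasurableSet.iInter fun i => (hext.iterate i.val) (hAmeas _ (hA i))
  have hdisjn : ∀ n, (coverIter (onePointExt T) 𝒜 n).PairwiseDisjoint id := by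
    rintro n B1 ⟨A1, hA1, rfl⟩ B2 ⟨A2, hA2, rfl⟩ hne
    rw [Function.onFun, id, id, Set.disjoint_left]
    intro y hy1 hy2
    apply hne
    have hAeq : A1 = A2 := by
      funext i
      by_contra hiz
      exact Set.disjoint_left.1 (hAdisj (hA1 i) (hA2 i) hiz)
        (mem_iInter.1 hy1 i) (mem_iInter.1 hy2 i)
    rw [hAeq]
  -- key inequality
  have key : ∀ n, partStatic μt (coverIter (onePointExt T) 𝒜 n)
      ≤ partStatic μ (coverIter T 𝒜' n) + (1 + Real.negMulLog a) := by
    intro n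
    have hfn := hfinn n
    have hfn' : (coverIter T 𝒜' n).Finite := (hcov n) ▸ hfn.image r
    have hPt : partStatic μt (coverIter (onePointExt T) 𝒜 n)
        = ∑ B ∈ hfn.toFinset, Real.negMulLog (μt B).toReal :=
      finsum_mem_eq_finite_toFinset_sum _ hfn
    have hP : partStatic μ (coverIter T 𝒜' n)
        = ∑ B' ∈ hfn'.toFinset, Real.negMulLog (μ B').toReal :=
      finsum_mem_eq_finite_toFinset_sum _ hfn'
    rw [hPt, hP]
    rw [← Finset.sum_filter_add_sum_filter_not hfn.toFinset (fun B => (∞ : OnePoint X) ∈ B)]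
    set sI := hfn.toFinset.filter (fun B => (∞ : OnePoint X) ∈ B) with hsI
    set s0 := hfn.toFinset.filter (fun B => ¬ (∞ : OnePoint X) ∈ B) with hs0
    have hA : ∑ B ∈ sI, Real.negMulLog (μt B).toReal ≤ 1 := by
      have hcard : sI.card ≤ 1 := by
        rw [Finset.card_le_one]
        intro B1 h1 B2 h2
        rw [hsI, Finset.mem_filter, Set.Finite.mem_toFinset] at h1 h2
        by_contra hne
        exact Set.disjoint_left.1 (hdisjn n h1.1 h2.1 hne) h1.2 h2.2
      calc ∑ B ∈ sI, Real.negMulLog (μt B).toReal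
          ≤ sI.card • (1:ℝ) := Finset.sum_le_card_nsmul _ _ 1
            (fun B _ => negMulLog_le_one' ENNReal.toReal_nonneg)
        _ = (sI.card : ℝ) := by rw [nsmul_eq_mul, mul_one]
        _ ≤ 1 := by exact_mod_cast hcard
    have hmem0 : ∀ B ∈ s0, B ∈ coverIter (onePointExt T) 𝒜 n ∧ (∞ : OnePoint X) ∉ B := by
      intro B hB
      rw [hs0, Finset.mem_filter, Set.Finite.mem_toFinset] at hB
      exact hB
    have hBim : ∀ B ∈ s0, ι '' (r B) = B := by
      intro B hB
      rw [image_preimage_eq_iff]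
      intro y hy
      induction y using OnePoint.rec with
      | infty => exact absurd hy (hmem0 B hB).2
      | coe x => exact ⟨x, rfl⟩
    have hkey0 : ∀ B ∈ s0, Real.negMulLog (μt B).toReal
        ≤ (μ (r B)).toReal * Real.negMulLog a + Real.negMulLog (μ (r B)).toReal := by
      intro B hB
      have h1 : μt B = (1 - c) * μ (r B) := by
        conv_lhs => rw [← hBim B hB]
        exact hμ (r B)
      have h2 : (μt B).toReal = a * (μ (r B)).toReal := by
        rw [h1, ENNReal.toReal_mul]
      rw [h2, Real.negMulLog_mul]
      have hφ : 0 ≤ Real.negMulLog (μ (r B)).toReal :=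
        Real.negMulLog_nonneg ENNReal.toReal_nonneg (hμ1 _)
      nlinarith
    have hsum0 : ∑ B ∈ s0, Real.negMulLog (μt B).toReal
        ≤ (∑ B ∈ s0, (μ (r B)).toReal) * Real.negMulLog a
          + ∑ B ∈ s0, Real.negMulLog (μ (r B)).toReal := by
      calc ∑ B ∈ s0, Real.negMulLog (μt B).toReal
          ≤ ∑ B ∈ s0, ((μ (r B)).toReal * Real.negMulLog a
              + Real.negMulLog (μ (r B)).toReal) := Finset.sum_le_sum hkey0
        _ = _ := by rw [Finset.sum_add_distrib, Finset.sum_mul]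
    have hdisj0 : (↑s0 : Set (Set (OnePoint X))).PairwiseDisjoint r := by
      intro B1 h1 B2 h2 hne
      rw [Finset.mem_coe] at h1 h2
      exact Disjoint.preimage _ (hdisjn n (hmem0 B1 h1).1 (hmem0 B2 h2).1 hne)
    have hmeas0 : ∀ B ∈ s0, MeasurableSet (r B) := fun B hB =>
      hemb.measurable (hmeasB n B (hmem0 B hB).1)
    have hsumμ : ∑ B ∈ s0, (μ (r B)).toReal ≤ 1 := by
      have h1 : ∑ B ∈ s0, μ (r B) = μ (⋃ B ∈ s0, r B) :=
        (measure_biUnion_finset hdisj0 hmeas0).symm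
      have h2 : (∑ B ∈ s0, μ (r B)).toReal = ∑ B ∈ s0, (μ (r B)).toReal :=
        ENNReal.toReal_sum (fun B _ => measure_ne_top μ _)
      rw [← h2, h1]
      exact hμ1 _
    have hinj : ∀ B1 ∈ s0, ∀ B2 ∈ s0, r B1 = r B2 → B1 = B2 := by
      intro B1 h1 B2 h2 h
      rw [← hBim B1 h1, ← hBim B2 h2, h]
    have hsub' : s0.image r ⊆ hfn'.toFinset := by
      intro B' hB'
      rw [Finset.mem_image] at hB'
      obtain ⟨B, hB, rfl⟩ := hB'
      rw [Set.Finite.mem_toFinset, hcov n]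
      exact ⟨B, (hmem0 B hB).1, rfl⟩
    have hsumφ : ∑ B ∈ s0, Real.negMulLog (μ (r B)).toReal
        ≤ ∑ B' ∈ hfn'.toFinset, Real.negMulLog (μ B').toReal := by
      have himg : ∑ B' ∈ s0.image r, Real.negMulLog (μ B').toReal
          = ∑ B ∈ s0, Real.negMulLog (μ (r B)).toReal := Finset.sum_image hinj
      rw [← himg]
      exact Finset.sum_le_sum_of_subset_of_nonneg hsub'
        (fun B' _ _ => Real.negMulLog_nonneg ENNReal.toReal_nonneg (hμ1 _))
    have hφa : 0 ≤ Real.negMulLog a := Real.negMulLog_nonneg ha0 ha1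
    have hsμnn : 0 ≤ ∑ B ∈ s0, (μ (r B)).toReal :=
      Finset.sum_nonneg fun _ _ => ENNReal.toReal_nonneg
    have h5 : (∑ B ∈ s0, (μ (r B)).toReal) * Real.negMulLog a ≤ Real.negMulLog a := by
      nlinarith
    linarith
  -- limsup part
  set K : ℝ := 1 + Real.negMulLog a with hK
  have hle : measPartEntropy (onePointExt T) μt 𝒜 ≤ measPartEntropy T μ 𝒜' := by
    rw [measPartEntropy, measPartEntropy]
    have h1 : Filter.limsup (fun n : ℕ =>
        ((partStatic μt (coverIter (onePointExt T) 𝒜 n) / n : ℝ) : EReal)) atTop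
        ≤ Filter.limsup (fun n : ℕ =>
          ((partStatic μ (coverIter T 𝒜' n) / n : ℝ) : EReal)
            + ((K / n : ℝ) : EReal)) atTop := by
      refine Filter.limsup_le_limsup (Eventually.of_forall fun n => ?_)
        Filter.isCobounded_le_of_bot Filter.isBounded_le_of_top
      have hdiv : partStatic μt (coverIter (onePointExt T) 𝒜 n) / n
          ≤ partStatic μ (coverIter T 𝒜' n) / n + K / n := by
        rw [← add_div]
        rcases Nat.eq_zero_or_pos n with h | h
        · subst h; simp
        · have hn : (0:ℝ) < n := by exact_mod_cast h
          exact (div_le_div_iff_of_pos_right hn).2 (key n)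
      calc ((partStatic μt (coverIter (onePointExt T) 𝒜 n) / n : ℝ) : EReal)
          ≤ ((partStatic μ (coverIter T 𝒜' n) / n + K / n : ℝ) : EReal) :=
            EReal.coe_le_coe_iff.2 hdiv
        _ = _ := EReal.coe_add _ _
    have hv : Filter.Tendsto (fun n : ℕ => ((K / n : ℝ) : EReal)) atTop (nhds (0 : EReal)) := by
      have h0 : Filter.Tendsto (fun n : ℕ => K / (n:ℝ)) atTop (nhds 0) :=
        tendsto_const_div_atTop_nhds_zero_nat K
      have := (continuous_coe_real_ereal.tendsto (0:ℝ)).comp h0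
      simpa [Function.comp_def] using this
    have hlv : Filter.limsup (fun n : ℕ => ((K / n : ℝ) : EReal)) atTop = 0 := hv.limsup_eq
    have h2 : Filter.limsup (fun n : ℕ =>
        ((partStatic μ (coverIter T 𝒜' n) / n : ℝ) : EReal) + ((K / n : ℝ) : EReal)) atTop
        ≤ Filter.limsup (fun n : ℕ =>
            ((partStatic μ (coverIter T 𝒜' n) / n : ℝ) : EReal)) atTop
          + Filter.limsup (fun n : ℕ => ((K / n : ℝ) : EReal)) atTop :=
      EReal.limsup_add_le (Or.inr (hlv ▸ EReal.zero_ne_top))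
        (Or.inr (hlv ▸ EReal.zero_ne_bot))
    refine h1.trans (h2.trans ?_)
    rw [hlv, add_zero]
  exact hle.trans (le_iSup₂ (f := fun B (_ : IsFinBorelPartition B) =>
    measPartEntropy T μ B) 𝒜' h𝒜')

open OnePoint in
/-- if `μ̃` is a `T̃`-invariant Borel probability on the one-point
compactification with `μ̃({∞}) = c < 1`, then `μ = (1/(1-c)) μ̃|_X` is a `T`-invariant
probability on `X` and `h_{μ̃}(T̃) ≤ h_μ(T)`. -/
theorem measEntropy_onePoint_le {X : Type*} [TopologicalSpace X] [LocallyCompactSpace X]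
    [TopologicalSpace.SeparableSpace X] [MeasurableSpace X] [BorelSpace X]
    [MeasurableSpace (OnePoint X)] [BorelSpace (OnePoint X)]
    (T : X → X) (hT : IsProper T)
    (μt : Measure (OnePoint X)) (hμt : IsProbabilityMeasure μt)
    (hinv : μt.map (onePointExt T) = μt)
    (hc : μt {(∞ : OnePoint X)} < 1) :
    IsProbabilityMeasure
      ((1 - μt {(∞ : OnePoint X)})⁻¹ • μt.comap (fun x : X => (x : OnePoint X))) ∧
    ((1 - μt {(∞ : OnePoint X)})⁻¹ • μt.comap (fun x : X => (x : OnePoint X))).map T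
      = (1 - μt {(∞ : OnePoint X)})⁻¹ • μt.comap (fun x : X => (x : OnePoint X)) ∧
    measEntropy (onePointExt T) μt ≤
      measEntropy T ((1 - μt {(∞ : OnePoint X)})⁻¹ • μt.comap (fun x : X => (x : OnePoint X))) := by
  
  haveI := hμt
  have hTm : Measurable T := hT.1.measurable
  have hemb : MeasurableEmbedding (fun x : X => (x : OnePoint X)) :=
    OnePoint.isOpenEmbedding_coe.measurableEmbedding
  have h0 : (1 : ℝ≥0∞) - μt {(∞ : OnePoint X)} ≠ 0 := (tsub_pos_of_lt hc).ne'
  have htop : (1 : ℝ≥0∞) - μt {(∞ : OnePoint X)} ≠ ⊤ :=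
    ne_top_of_le_ne_top ENNReal.one_ne_top tsub_le_self
  have hprob := isProb_aux (X := X) μt hc
  refine ⟨hprob, map_aux hTm μt hinv _, ?_⟩
  haveI := hprob
  refine entropy_aux hTm μt _ ?_
  intro s
  rw [Measure.smul_apply, smul_eq_mul, hemb.comap_apply, ← mul_assoc,
    ENNReal.mul_inv_cancel h0 htop, one_mul]
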